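/- For l+k ≥ 1, the dimension of Hom_{S_n}((ℝⁿ)^{⊗k}, (ℝⁿ)^{⊗l}) over ℝ equals the number of set partitions of a set of l+k elements into at most n blocks, i.e. Σ_{t=1}^{n} S(l+k, t), where S(l+k, t) denotes the Stirling number of the second kind. -/
import Mathlib


open Classical
noncomputable section

/-- The `k`-th tensor (Kronecker) power of an `n × n` real matrix. -/
def tensorPow (n k : ℕ) (g : Matrix (Fin n) (Fin n) ℝ) :
    Matrix (Fin k → Fin n) (Fin k → Fin n) ℝ :=
  Matrix.of fun I J => ∏ i, g (I i) (J i)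

/-- The permutation matrix of `σ ∈ S_n`, sending `e_j` to `e_{σ j}`. -/
def permMat (n : ℕ) (σ : Equiv.Perm (Fin n)) : Matrix (Fin n) (Fin n) ℝ :=
  Matrix.of fun i j => if i = σ j then (1 : ℝ) else 0

/-- The space `Hom_{S_n}((ℝⁿ)^{⊗k}, (ℝⁿ)^{⊗l})` of `S_n`-equivariant linear maps,
as a submodule of the space of matrices. -/
def equivSubmodule (n k l : ℕ) :
    Submodule ℝ (Matrix (Fin l → Fin n) (Fin k → Fin n) ℝ) where
  carrier := {φ | ∀ σ : Equiv.Perm (Fin n),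
    tensorPow n l (permMat n σ) * φ = φ * tensorPow n k (permMat n σ)}
  add_mem' := by
    intro a b ha hb σ
    rw [Matrix.mul_add, Matrix.add_mul, ha σ, hb σ]
  zero_mem' := by
    intro σ
    rw [Matrix.mul_zero, Matrix.zero_mul]
  smul_mem' := by
    intro c a ha σ
    rw [Matrix.mul_smul, Matrix.smul_mul, ha σ]

/-- Stirling numbers of the second kind: `stirling2 m t` counts the set partitions of
an `m`-element set into exactly `t` blocks. -/
def stirling2 : ℕ → ℕ → ℕ
  | 0, 0 => 1
  | 0, _ + 1 => 0
  | _ + 1, 0 => 0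
  | m + 1, t + 1 => (t + 1) * stirling2 m (t + 1) + stirling2 m t

lemma tensorPow_permMat (n k : ℕ) (σ : Equiv.Perm (Fin n)) (I J : Fin k → Fin n) :
    tensorPow n k (permMat n σ) I J = if I = ⇑σ ∘ J then 1 else 0 := by
  simp only [tensorPow, permMat, Matrix.of_apply]
  by_cases h : I = ⇑σ ∘ J
  · subst h; simp
  · simp only [if_neg h]
    obtain ⟨x, hx⟩ : ∃ x, I x ≠ σ (J x) := by
      by_contra hc; push_neg at hc; exact h (funext hc)
    exact Finset.prod_eq_zero (Finset.mem_univ x) (if_neg hx)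

lemma mul_tensorPow (n k l : ℕ) (σ : Equiv.Perm (Fin n))
    (φ : Matrix (Fin l → Fin n) (Fin k → Fin n) ℝ) (I : Fin l → Fin n) (J : Fin k → Fin n) :
    (φ * tensorPow n k (permMat n σ)) I J = φ I (⇑σ ∘ J) := by
  rw [Matrix.mul_apply]
  rw [Finset.sum_eq_single (⇑σ ∘ J)]
  · rw [tensorPow_permMat, if_pos rfl, mul_one]
  · intro b _ hb; rw [tensorPow_permMat, if_neg hb, mul_zero]
  · intro h; exact absurd (Finset.mem_univ _) h

lemma tensorPow_mul (n k l : ℕ) (σ : Equiv.Perm (Fin n))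
    (φ : Matrix (Fin l → Fin n) (Fin k → Fin n) ℝ) (I : Fin l → Fin n) (J : Fin k → Fin n) :
    (tensorPow n l (permMat n σ) * φ) I J = φ (σ.symm ∘ I) J := by
  rw [Matrix.mul_apply]
  rw [Finset.sum_eq_single (⇑σ.symm ∘ I)]
  · rw [tensorPow_permMat, if_pos (by funext i; simp), one_mul]
  · intro b _ hb
    rw [tensorPow_permMat, if_neg, zero_mul]
    intro h; apply hb; funext i; have := congrFun h i; simp at this; simp [this]
  · intro h; exact absurd (Finset.mem_univ _) h

lemma mem_equivSubmodule_iff (n k l : ℕ) (φ : Matrix (Fin l → Fin n) (Fin k → Fin n) ℝ) :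
    φ ∈ equivSubmodule n k l ↔
      ∀ (σ : Equiv.Perm (Fin n)) (I : Fin l → Fin n) (J : Fin k → Fin n),
        φ (⇑σ ∘ I) (⇑σ ∘ J) = φ I J := by
  constructor
  · intro h σ I J
    have := congrFun (congrFun (h σ) (⇑σ ∘ I)) J
    rw [tensorPow_mul, mul_tensorPow] at this
    have hI : ⇑σ.symm ∘ (⇑σ ∘ I) = I := by funext i; simp
    rw [hI] at this
    exact this.symm
  · intro h σ
    funext I J
    show (tensorPow n l (permMat n σ) * φ) I J = (φ * tensorPow n k (permMat n σ)) I J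
    rw [tensorPow_mul, mul_tensorPow]
    have := h σ (⇑σ.symm ∘ I) J
    have hI : ⇑σ ∘ (⇑σ.symm ∘ I) = I := by funext i; simp
    rw [hI] at this
    exact this.symm

def actS (m n : ℕ) : Setoid (Fin m → Fin n) where
  r f g := ∃ σ : Equiv.Perm (Fin n), ⇑σ ∘ f = g
  iseqv := by
    constructor
    · exact fun f => ⟨1, by funext i; simp⟩
    · rintro f g ⟨σ, rfl⟩
      exact ⟨σ⁻¹, by funext i; simp⟩
    · rintro f g h ⟨σ, rfl⟩ ⟨τ, rfl⟩
      exact ⟨τ * σ, by funext i; simp⟩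

def combine (n k l : ℕ) (I : Fin l → Fin n) (J : Fin k → Fin n) : Fin (l + k) → Fin n :=
  fun x => Sum.elim I J (finSumFinEquiv.symm x)

def leftPart (n k l : ℕ) (F : Fin (l + k) → Fin n) : Fin l → Fin n :=
  fun i => F (finSumFinEquiv (Sum.inl i))

def rightPart (n k l : ℕ) (F : Fin (l + k) → Fin n) : Fin k → Fin n :=
  fun j => F (finSumFinEquiv (Sum.inr j))

lemma leftPart_combine (n k l : ℕ) (I : Fin l → Fin n) (J : Fin k → Fin n) :
    leftPart n k l (combine n k l I J) = I := by
  funext i; simp [leftPart, combine]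

lemma rightPart_combine (n k l : ℕ) (I : Fin l → Fin n) (J : Fin k → Fin n) :
    rightPart n k l (combine n k l I J) = J := by
  funext j; simp [rightPart, combine]

lemma combine_parts (n k l : ℕ) (F : Fin (l + k) → Fin n) :
    combine n k l (leftPart n k l F) (rightPart n k l F) = F := by
  funext x
  simp only [combine, leftPart, rightPart]
  rcases h : finSumFinEquiv.symm x with u | u <;>
  · simp only [Sum.elim_inl, Sum.elim_inr, leftPart, rightPart]
    rw [← h, Equiv.apply_symm_apply]

lemma combine_comp (n k l : ℕ) (σ : Equiv.Perm (Fin n)) (I : Fin l → Fin n) (J : Fin k → Fin n) :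
    combine n k l (⇑σ ∘ I) (⇑σ ∘ J) = ⇑σ ∘ combine n k l I J := by
  funext x
  simp only [combine, Function.comp_apply]
  rcases finSumFinEquiv.symm x with u | u <;> rfl

def equivSubmoduleEquiv (n k l : ℕ) :
    equivSubmodule n k l ≃ₗ[ℝ] (Quotient (actS (l + k) n) → ℝ) where
  toFun φ := fun q => Quotient.liftOn q (fun F => φ.1 (leftPart n k l F) (rightPart n k l F))
    (by
      rintro f g ⟨σ, rfl⟩
      have h := (mem_equivSubmodule_iff n k l φ.1).1 φ.2 σ (leftPart n k l f) (rightPart n k l f)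
      have hl : leftPart n k l (⇑σ ∘ f) = ⇑σ ∘ leftPart n k l f := rfl
      have hr : rightPart n k l (⇑σ ∘ f) = ⇑σ ∘ rightPart n k l f := rfl
      simp only [hl, hr, h])
  map_add' φ ψ := by
    funext q
    induction q using Quotient.ind
    rfl
  map_smul' c φ := by
    funext q
    induction q using Quotient.ind
    rfl
  invFun h := ⟨Matrix.of fun I J => h (Quotient.mk (actS (l + k) n) (combine n k l I J)), by
    rw [mem_equivSubmodule_iff]
    intro σ I J
    show h _ = h _
    congr 1
    rw [combine_comp]
    exact Quotient.sound ⟨σ⁻¹, by funext i; simp⟩⟩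
  left_inv φ := by
    apply Subtype.ext
    funext I J
    show φ.1 (leftPart n k l (combine n k l I J)) (rightPart n k l (combine n k l I J)) = φ.1 I J
    rw [leftPart_combine, rightPart_combine]
  right_inv h := by
    funext q
    induction q using Quotient.ind with
    | _ F =>
      show h _ = h _
      congr 1
      rw [combine_parts]

instance (m n : ℕ) : Fintype (Quotient (actS m n)) := Quotient.fintype _

lemma finrank_eq_card_quot (n k l : ℕ) :
    Module.finrank ℝ (equivSubmodule n k l) = Fintype.card (Quotient (actS (l + k) n)) := by
  rw [LinearEquiv.finrank_eq (equivSubmoduleEquiv n k l), Module.finrank_pi]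


instance setoidFinite (α : Type*) [Finite α] : Finite (Setoid α) :=
  Finite.of_injective (fun s => s.r) (fun s t h => Setoid.ext (fun a b => by rw [show s.r = t.r from h]))

lemma ker_eq_iff {m n : ℕ} (f g : Fin m → Fin n) :
    Setoid.ker f = Setoid.ker g ↔ ∃ σ : Equiv.Perm (Fin n), ⇑σ ∘ f = g := by
  constructor
  · intro h
    have hfg : ∀ a b, f a = f b ↔ g a = g b := by
      intro a b
      have := Setoid.ext_iff.1 h a b
      exact this
    -- build equiv between ranges
    let e : {x // x ∈ Set.range f} ≃ {x // x ∈ Set.range g} :=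
      { toFun := fun y => ⟨g (Classical.choose y.2), Set.mem_range_self _⟩
        invFun := fun y => ⟨f (Classical.choose y.2), Set.mem_range_self _⟩
        left_inv := by
          rintro ⟨y, hy⟩
          have h1 : f (Classical.choose hy) = y := Classical.choose_spec hy
          apply Subtype.ext
          simp only
          set j := Classical.choose (Set.mem_range_self (f := g) (Classical.choose hy)) with hj
          have h2 : g j = g (Classical.choose hy) :=
            Classical.choose_spec (Set.mem_range_self (f := g) (Classical.choose hy))
          have := (hfg j (Classical.choose hy)).2 h2
          rw [this, h1]
        right_inv := by
          rintro ⟨y, hy⟩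
          have h1 : g (Classical.choose hy) = y := Classical.choose_spec hy
          apply Subtype.ext
          simp only
          set j := Classical.choose (Set.mem_range_self (f := f) (Classical.choose hy)) with hj
          have h2 : f j = f (Classical.choose hy) :=
            Classical.choose_spec (Set.mem_range_self (f := f) (Classical.choose hy))
          have := (hfg j (Classical.choose hy)).1 h2
          rw [this, h1] }
    refine ⟨e.extendSubtype, ?_⟩
    funext i
    have hmem : f i ∈ Set.range f := Set.mem_range_self i
    have h1 : e.extendSubtype (f i) = (e ⟨f i, hmem⟩ : Fin n) := by
      rw [Equiv.extendSubtype_apply_of_mem]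
    rw [Function.comp_apply, h1]
    show g (Classical.choose hmem) = g i
    exact (hfg _ i).1 (Classical.choose_spec hmem)
  · rintro ⟨σ, rfl⟩
    apply Setoid.ext
    intro a b
    show f a = f b ↔ σ (f a) = σ (f b)
    exact ⟨fun h => by rw [h], fun h => σ.injective h⟩

lemma card_quot_ker_le {m n : ℕ} (f : Fin m → Fin n) :
    Nat.card (Quotient (Setoid.ker f)) ≤ n := by
  rw [Nat.card_congr (Setoid.quotientKerEquivRange f)]
  calc Nat.card (Set.range f) ≤ Nat.card (Fin n) :=
        Nat.card_le_card_of_injective _ Subtype.val_injective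
    _ = n := by simp [Nat.card_eq_fintype_card]

def kerMap (m n : ℕ) :
    Quotient (actS m n) → {s : Setoid (Fin m) // Nat.card (Quotient s) ≤ n} :=
  Quotient.lift (fun f => ⟨Setoid.ker f, card_quot_ker_le f⟩)
    (by
      rintro f g ⟨σ, rfl⟩
      exact Subtype.ext ((ker_eq_iff f (⇑σ ∘ f)).2 ⟨σ, rfl⟩))

lemma kerMap_bijective (m n : ℕ) : Function.Bijective (kerMap m n) := by
  constructor
  · intro q1 q2
    induction q1 using Quotient.ind with | _ f =>
    induction q2 using Quotient.ind with | _ g =>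
    intro h
    have : Setoid.ker f = Setoid.ker g := congrArg Subtype.val h
    exact Quotient.sound ((ker_eq_iff f g).1 this)
  · rintro ⟨s, hs⟩
    have : Nat.card (Quotient s) = Fintype.card (Quotient s) := Nat.card_eq_fintype_card
    have hle : Fintype.card (Quotient s) ≤ Fintype.card (Fin n) := by
      rw [Fintype.card_fin]; omega
    obtain ⟨emb⟩ := Function.Embedding.nonempty_of_card_le hle
    refine ⟨Quotient.mk _ (fun i => emb (Quotient.mk s i)), ?_⟩
    apply Subtype.ext
    show Setoid.ker _ = s
    apply Setoid.ext
    intro a b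
    show emb (Quotient.mk s a) = emb (Quotient.mk s b) ↔ s a b
    rw [emb.injective.eq_iff]
    exact ⟨fun h => Quotient.exact h, fun h => Quotient.sound h⟩

def extFun {m : ℕ} (s' : Setoid (Fin m)) (o : Option (Quotient s')) :
    Fin (m + 1) → Option (Quotient s') :=
  Fin.lastCases o (fun i => some (Quotient.mk s' i))

@[simp] lemma extFun_last {m : ℕ} (s' : Setoid (Fin m)) (o : Option (Quotient s')) :
    extFun s' o (Fin.last m) = o := by
  simp [extFun]

@[simp] lemma extFun_castSucc {m : ℕ} (s' : Setoid (Fin m)) (o : Option (Quotient s'))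
    (i : Fin m) : extFun s' o (Fin.castSucc i) = some (Quotient.mk s' i) := by
  simp [extFun]

def extSetoid {m : ℕ} (s' : Setoid (Fin m)) (o : Option (Quotient s')) : Setoid (Fin (m + 1)) :=
  Setoid.ker (extFun s' o)

lemma range_extFun {m : ℕ} (s' : Setoid (Fin m)) (o : Option (Quotient s')) :
    Set.range (extFun s' o) = insert o (Set.range some) := by
  ext z
  constructor
  · rintro ⟨x, rfl⟩
    induction x using Fin.lastCases with
    | last => simp
    | cast i => simp
  · rintro (rfl | ⟨q, rfl⟩)
    · exact ⟨Fin.last m, by simp⟩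
    · obtain ⟨i, rfl⟩ := Quotient.exists_rep q
      exact ⟨Fin.castSucc i, by simp⟩

lemma card_extSetoid_none {m : ℕ} (s' : Setoid (Fin m)) :
    Nat.card (Quotient (extSetoid s' (none : Option (Quotient s')))) = Nat.card (Quotient s') + 1 := by
  rw [show Quotient (extSetoid s' none) = Quotient (Setoid.ker (extFun s' none)) from rfl,
    Nat.card_congr (Setoid.quotientKerEquivRange _), range_extFun]
  have hnm : (none : Option (Quotient s')) ∉ Set.range some := by simp
  rw [Nat.card_coe_set_eq, Set.ncard_insert_of_notMem hnm (Set.toFinite _),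
    ← Nat.card_coe_set_eq, Nat.card_range_of_injective (Option.some_injective _)]

lemma card_extSetoid_some {m : ℕ} (s' : Setoid (Fin m)) (q : Quotient s') :
    Nat.card (Quotient (extSetoid s' (some q))) = Nat.card (Quotient s') := by
  rw [show Quotient (extSetoid s' (some q)) = Quotient (Setoid.ker (extFun s' (some q))) from rfl,
    Nat.card_congr (Setoid.quotientKerEquivRange _), range_extFun,
    Set.insert_eq_self.2 (Set.mem_range_self q),
    Nat.card_range_of_injective (Option.some_injective _)]

lemma comap_extSetoid {m : ℕ} (s' : Setoid (Fin m)) (o : Option (Quotient s')) :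
    Setoid.comap Fin.castSucc (extSetoid s' o) = s' := by
  apply Setoid.ext
  intro a b
  show extFun s' o (Fin.castSucc a) = extFun s' o (Fin.castSucc b) ↔ s' a b
  simp only [extFun_castSucc, Option.some_inj]
  exact ⟨Quotient.exact, Quotient.sound⟩

lemma extSetoid_bijective (m : ℕ) :
    Function.Bijective (fun p : Σ s' : Setoid (Fin m), Option (Quotient s') =>
      extSetoid p.1 p.2) := by
  constructor
  · rintro ⟨s1, o1⟩ ⟨s2, o2⟩ h
    simp only at h
    have hs : s1 = s2 := by
      rw [← comap_extSetoid s1 o1, ← comap_extSetoid s2 o2, h]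
    subst hs
    refine Sigma.ext rfl (heq_of_eq ?_)
    have key : ∀ x y : Fin (m + 1), (extFun s1 o1 x = extFun s1 o1 y) ↔
        (extFun s1 o2 x = extFun s1 o2 y) := fun x y => Setoid.ext_iff.1 h x y
    match o1, o2 with
    | none, none => rfl
    | some q1, some q2 =>
      obtain ⟨i, rfl⟩ := Quotient.exists_rep q1
      have h1 : extFun s1 (some (Quotient.mk s1 i)) (Fin.last m)
          = extFun s1 (some (Quotient.mk s1 i)) (Fin.castSucc i) := by simp
      have h2 := (key _ _).1 h1
      simp only [extFun_last, extFun_castSucc] at h2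
      rw [h2]
    | some q1, none =>
      obtain ⟨i, rfl⟩ := Quotient.exists_rep q1
      have h1 : extFun s1 (some (Quotient.mk s1 i)) (Fin.last m)
          = extFun s1 (some (Quotient.mk s1 i)) (Fin.castSucc i) := by simp
      have h2 := (key _ _).1 h1
      simp at h2
    | none, some q2 =>
      obtain ⟨i, rfl⟩ := Quotient.exists_rep q2
      have h1 : extFun s1 (some (Quotient.mk s1 i)) (Fin.last m)
          = extFun s1 (some (Quotient.mk s1 i)) (Fin.castSucc i) := by simp
      have h2 := (key _ _).2 h1
      simp at h2
  · intro s
    classical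
    set s' := Setoid.comap Fin.castSucc s with hs'
    by_cases h : ∃ i : Fin m, s (Fin.castSucc i) (Fin.last m)
    · obtain ⟨i0, hi0⟩ := h
      refine ⟨⟨s', some (Quotient.mk s' i0)⟩, ?_⟩
      apply Setoid.ext
      intro x y
      show extFun s' _ x = extFun s' _ y ↔ s x y
      induction x using Fin.lastCases with
      | last =>
        induction y using Fin.lastCases with
        | last => simpa using s.refl' _
        | cast b =>
          simp only [extFun_last, extFun_castSucc, Option.some_inj]
          constructor
          · intro hq
            have : s' i0 b := Quotient.exact hq
            exact s.trans' (s.symm' hi0) this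
          · intro hxy
            apply Quotient.sound
            show s (Fin.castSucc i0) (Fin.castSucc b)
            exact s.trans' hi0 hxy
      | cast a =>
        induction y using Fin.lastCases with
        | last =>
          simp only [extFun_last, extFun_castSucc, Option.some_inj]
          constructor
          · intro hq
            have : s' a i0 := Quotient.exact hq
            exact s.trans' this hi0
          · intro hxy
            apply Quotient.sound
            show s (Fin.castSucc a) (Fin.castSucc i0)
            exact s.trans' hxy (s.symm' hi0)
        | cast b =>
          simp only [extFun_castSucc, Option.some_inj]
          exact ⟨fun hq => show s' a b from Quotient.exact hq,
            fun hxy => Quotient.sound (show s' a b from hxy)⟩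
    · refine ⟨⟨s', none⟩, ?_⟩
      apply Setoid.ext
      intro x y
      show extFun s' _ x = extFun s' _ y ↔ s x y
      induction x using Fin.lastCases with
      | last =>
        induction y using Fin.lastCases with
        | last => simpa using s.refl' _
        | cast b =>
          simp only [extFun_last, extFun_castSucc]
          constructor
          · intro hq; exact absurd hq (by simp)
          · intro hxy; exact absurd ⟨b, s.symm' hxy⟩ h
      | cast a =>
        induction y using Fin.lastCases with
        | last =>
          simp only [extFun_last, extFun_castSucc]
          constructor
          · intro hq; exact absurd hq (by simp)
          · intro hxy; exact absurd ⟨a, hxy⟩ h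
        | cast b =>
          simp only [extFun_castSucc, Option.some_inj]
          exact ⟨fun hq => show s' a b from Quotient.exact hq,
            fun hxy => Quotient.sound (show s' a b from hxy)⟩

lemma nat_card_option_subtype {β : Type*} [Finite β] (Q : Option β → Prop) :
    Nat.card {o : Option β // Q o} =
      (if Q none then 1 else 0) + Nat.card {b : β // Q (some b)} := by
  classical
  have e : {o : Option β // Q o} ≃ ({u : Unit // Q none} ⊕ {b : β // Q (some b)}) :=
    { toFun := fun x => match x with
        | ⟨none, h⟩ => Sum.inl ⟨Unit.unit, h⟩
        | ⟨some b, h⟩ => Sum.inr ⟨b, h⟩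
      invFun := fun x => match x with
        | Sum.inl ⟨_, h⟩ => ⟨none, h⟩
        | Sum.inr ⟨b, h⟩ => ⟨some b, h⟩
      left_inv := by rintro ⟨none | b, h⟩ <;> rfl
      right_inv := by rintro (⟨⟨⟩, h⟩ | ⟨b, h⟩) <;> rfl }
  rw [Nat.card_congr e, Nat.card_sum]
  congr 1
  by_cases h : Q none
  · have : Nonempty {u : Unit // Q none} := ⟨⟨Unit.unit, h⟩⟩
    rw [if_pos h, Nat.card_unique]
  · have : IsEmpty {u : Unit // Q none} := ⟨fun x => h x.2⟩
    rw [if_neg h, Nat.card_of_isEmpty]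

lemma nat_card_subtype_const {β : Type*} (p : Prop) :
    Nat.card {_b : β // p} = if p then Nat.card β else 0 := by
  by_cases h : p
  · rw [if_pos h, Nat.card_congr (Equiv.subtypeUnivEquiv (fun _ => h))]
  · have : IsEmpty {_b : β // p} := ⟨fun x => h x.2⟩
    rw [if_neg h, Nat.card_of_isEmpty]

def sigmaSubtype {ι : Type*} {β : ι → Type*} (P : (Σ i, β i) → Prop) :
    {p : Σ i, β i // P p} ≃ Σ i, {b : β i // P ⟨i, b⟩} where
  toFun x := ⟨x.1.1, ⟨x.1.2, by rcases x with ⟨⟨i, b⟩, h⟩; exact h⟩⟩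
  invFun x := ⟨⟨x.1, x.2.1⟩, x.2.2⟩
  left_inv := by rintro ⟨⟨i, b⟩, h⟩; rfl
  right_inv := by rintro ⟨i, ⟨b, h⟩⟩; rfl

noncomputable instance (m : ℕ) : Fintype (Setoid (Fin m)) := Fintype.ofFinite _

lemma card_setoid_classes : ∀ m t : ℕ,
    Nat.card {s : Setoid (Fin m) // Nat.card (Quotient s) = t} = stirling2 m t := by
  intro m
  induction m with
  | zero =>
    intro t
    have hsub : ∀ s₁ s₂ : Setoid (Fin 0), s₁ = s₂ :=
      fun s₁ s₂ => Setoid.ext (fun a => a.elim0)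
    have hcard : ∀ s : Setoid (Fin 0), Nat.card (Quotient s) = 0 := by
      intro s
      have : IsEmpty (Quotient s) := ⟨fun q => Quotient.ind (motive := fun _ => False) (fun a => a.elim0) q⟩
      exact Nat.card_of_isEmpty
    match t with
    | 0 =>
      have : Nonempty {s : Setoid (Fin 0) // Nat.card (Quotient s) = 0} :=
        ⟨⟨Setoid.ker id, hcard _⟩⟩
      have : Subsingleton {s : Setoid (Fin 0) // Nat.card (Quotient s) = 0} :=
        ⟨fun a b => Subtype.ext (hsub _ _)⟩
      rw [show stirling2 0 0 = 1 from rfl]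
      exact Nat.card_unique
    | t + 1 =>
      have : IsEmpty {s : Setoid (Fin 0) // Nat.card (Quotient s) = t + 1} :=
        ⟨fun x => by have := hcard x.1; have := x.2; omega⟩
      rw [show stirling2 0 (t+1) = 0 from rfl]
      exact Nat.card_of_isEmpty
  | succ m ih =>
    intro t
    -- transfer along the bijection extSetoid
    have e1 : {s : Setoid (Fin (m+1)) // Nat.card (Quotient s) = t} ≃
        {p : Σ s' : Setoid (Fin m), Option (Quotient s') //
          Nat.card (Quotient (extSetoid p.1 p.2)) = t} :=
      ((Equiv.ofBijective _ (extSetoid_bijective m)).subtypeEquiv (fun p => Iff.rfl)).symm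
    rw [Nat.card_congr e1, Nat.card_congr (sigmaSubtype _), Nat.card_eq_fintype_card,
      Fintype.card_sigma]
    have hterm : ∀ s' : Setoid (Fin m),
        Fintype.card {o : Option (Quotient s') // Nat.card (Quotient (extSetoid s' o)) = t} =
          (if Nat.card (Quotient s') + 1 = t then 1 else 0) +
          (if Nat.card (Quotient s') = t then t else 0) := by
      intro s'
      rw [← Nat.card_eq_fintype_card, nat_card_option_subtype]
      congr 1
      · rw [card_extSetoid_none]
        split_ifs <;> rfl
      · have e2 : {q : Quotient s' // Nat.card (Quotient (extSetoid s' (some q))) = t} ≃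
            {_q : Quotient s' // Nat.card (Quotient s') = t} :=
          Equiv.subtypeEquivRight (fun q => by rw [card_extSetoid_some])
        rw [Nat.card_congr e2, nat_card_subtype_const]
        split_ifs with h
        · exact h
        · rfl
    rw [Finset.sum_congr rfl (fun s' _ => hterm s'), Finset.sum_add_distrib]
    have h1 : (∑ s' : Setoid (Fin m), if Nat.card (Quotient s') + 1 = t then 1 else 0) =
        Nat.card {s' : Setoid (Fin m) // Nat.card (Quotient s') + 1 = t} := by
      rw [Nat.card_eq_fintype_card, Fintype.card_subtype, ← Finset.sum_filter]
      simp
    have h2 : (∑ s' : Setoid (Fin m), if Nat.card (Quotient s') = t then t else 0) =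
        t * Nat.card {s' : Setoid (Fin m) // Nat.card (Quotient s') = t} := by
      rw [Nat.card_eq_fintype_card, Fintype.card_subtype, ← Finset.sum_filter,
        Finset.sum_const, smul_eq_mul, mul_comm]
    rw [h1, h2, ih t]
    match t with
    | 0 =>
      have : IsEmpty {s' : Setoid (Fin m) // Nat.card (Quotient s') + 1 = 0} :=
        ⟨fun x => by have := x.2; omega⟩
      rw [Nat.card_of_isEmpty, show stirling2 (m+1) 0 = 0 from rfl]
      omega
    | u + 1 =>
      have e3 : {s' : Setoid (Fin m) // Nat.card (Quotient s') + 1 = u + 1} ≃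
          {s' : Setoid (Fin m) // Nat.card (Quotient s') = u} :=
        Equiv.subtypeEquivRight (fun s' => by omega)
      rw [Nat.card_congr e3, ih u]
      show stirling2 m u + (u+1) * stirling2 m (u+1) = stirling2 (m+1) (u+1)
      rw [show stirling2 (m+1) (u+1) = (u+1) * stirling2 m (u+1) + stirling2 m u from rfl]
      omega

lemma card_quot_actS (m n : ℕ) (hm : 1 ≤ m) :
    Nat.card (Quotient (actS m n)) = ∑ t ∈ Finset.Icc 1 n, stirling2 m t := by
  rw [Nat.card_congr (Equiv.ofBijective _ (kerMap_bijective m n))]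
  rw [Nat.card_eq_fintype_card, Fintype.card_subtype]
  rw [Finset.card_eq_sum_card_fiberwise
    (f := fun s : Setoid (Fin m) => Nat.card (Quotient s)) (t := Finset.Icc 1 n)
    (fun s hs => by
      have h1 : Nat.card (Quotient s) ≤ n := (Finset.mem_filter.1 hs).2
      have : Nonempty (Quotient s) := ⟨Quotient.mk s ⟨0, hm⟩⟩
      have h2 : 0 < Nat.card (Quotient s) := Nat.card_pos
      exact Finset.mem_Icc.2 ⟨h2, h1⟩)]
  apply Finset.sum_congr rfl
  intro t ht
  have htn : t ≤ n := (Finset.mem_Icc.1 ht).2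
  rw [Finset.filter_filter]
  rw [Finset.filter_congr (q := fun s : Setoid (Fin m) => Nat.card (Quotient s) = t)
    (fun s _ => by constructor
                   · exact fun h => h.2
                   · exact fun h => ⟨by omega, h⟩)]
  rw [← Fintype.card_subtype, ← Nat.card_eq_fintype_card, card_setoid_classes]

/-- for `l + k ≥ 1`, the dimension of `Hom_{S_n}((ℝⁿ)^{⊗k}, (ℝⁿ)^{⊗l})`
over `ℝ` equals `Σ_{t=1}^{n} S(l+k, t)`, the number of set partitions of a set of
`l+k` elements into at most `n` blocks. -/
theorem finrank_equivSubmodule (n k l : ℕ) (hn : 0 < n) (hlk : 1 ≤ l + k) :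
    Module.finrank ℝ (equivSubmodule n k l) = ∑ t ∈ Finset.Icc 1 n, stirling2 (l + k) t := by
  rw [finrank_eq_card_quot, ← Nat.card_eq_fintype_card, card_quot_actS (l + k) n hlk]
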